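/- Let K ≥ N ≥ 1 be natural numbers and let X be an antisymmetric N-th order tensor of dimension K over ℂ. Then rank_cp(X) ≤ binom(K, N) · rank_cp(E), where E is the determinant tensor of order N and dimension N. -/
import Mathlib


open scoped BigOperators

/-- The CP (canonical polyadic) rank of an `N`-th order tensor of dimension `K` over `ℂ`:
the least `p` such that the tensor is a sum of `p` elementary tensor products. -/
noncomputable def cpRank {N K : ℕ} (X : (Fin N → Fin K) → ℂ) : ℕ :=
  sInf {p : ℕ | ∃ x : Fin p → Fin N → Fin K → ℂ,
    ∀ k : Fin N → Fin K, X k = ∑ i, ∏ j, x i j (k j)}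

/-- An `N`-th order tensor is antisymmetric if it changes sign under any permutation
of its indices according to the sign of the permutation. -/
def IsAntisymTensor {N K : ℕ} (X : (Fin N → Fin K) → ℂ) : Prop :=
  ∀ (π : Equiv.Perm (Fin N)) (k : Fin N → Fin K),
    X (k ∘ π) = ((Equiv.Perm.sign π : ℤ) : ℂ) * X k

/-- The determinant tensor: `E ℓ = sgn ℓ` if `ℓ` is a permutation of `Fin N`, `0` otherwise. -/
noncomputable def detTensor (N : ℕ) : (Fin N → Fin N) → ℂ :=
  fun ℓ => ∑ π : Equiv.Perm (Fin N),
    if ℓ = ⇑π then ((Equiv.Perm.sign π : ℤ) : ℂ) else 0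

/-- The basis antisymmetric tensor associated with `u : Fin N → Fin K`:
`E_u ℓ = sgn π` if `ℓ = u ∘ π` for a (necessarily unique, when `u` is injective)
permutation `π` of `Fin N`, and `0` otherwise. -/
noncomputable def basisTensor {N K : ℕ} (u : Fin N → Fin K) : (Fin N → Fin K) → ℂ :=
  fun ℓ => ∑ π : Equiv.Perm (Fin N),
    if ℓ = u ∘ ⇑π then ((Equiv.Perm.sign π : ℤ) : ℂ) else 0

/-- A function on `N`-tuples is antisymmetric if it changes sign under any permutation
of its arguments according to the sign of the permutation. -/
def IsAntisymFun {N : ℕ} {Ω : Type*} (f : (Fin N → Ω) → ℂ) : Prop :=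
  ∀ (π : Equiv.Perm (Fin N)) (r : Fin N → Ω),
    f (r ∘ π) = ((Equiv.Perm.sign π : ℤ) : ℂ) * f r

/-! ### Auxiliary lemmas -/

def HasDecomp {N K : ℕ} (X : (Fin N → Fin K) → ℂ) (p : ℕ) : Prop :=
  ∃ x : Fin p → Fin N → Fin K → ℂ, ∀ k, X k = ∑ i, ∏ j, x i j (k j)

lemma cpRank_le_of_hasDecomp {N K p : ℕ} {X : (Fin N → Fin K) → ℂ}
    (h : HasDecomp X p) : cpRank X ≤ p := Nat.sInf_le h

lemma exists_hasDecomp {N K : ℕ} (hN : 0 < N) (X : (Fin N → Fin K) → ℂ) :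
    ∃ p, HasDecomp X p := by
  classical
  set e := (Fintype.equivFin (Fin N → Fin K)).symm with he
  refine ⟨Fintype.card (Fin N → Fin K), fun i j t =>
    (if j = (⟨0, hN⟩ : Fin N) then X (e i) else 1) * (if t = e i j then 1 else 0),
    fun k => ?_⟩
  have : ∀ i, (∏ j, ((if j = (⟨0, hN⟩ : Fin N) then X (e i) else 1) *
      (if k j = e i j then 1 else 0))) = X (e i) * (if k = e i then 1 else 0) := by
    intro i
    rw [Finset.prod_mul_distrib, Finset.prod_ite_eq' Finset.univ (⟨0, hN⟩ : Fin N)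
      (fun _ => X (e i)), Finset.prod_boole]
    simp [funext_iff]
  rw [Finset.sum_congr rfl (fun i _ => this i)]
  rw [← Equiv.sum_comp e.symm (fun i => X (e i) * (if k = e i then 1 else 0))]
  simp

lemma hasDecomp_cpRank {N K : ℕ} (hN : 0 < N) (X : (Fin N → Fin K) → ℂ) :
    HasDecomp X (cpRank X) :=
  Nat.sInf_mem (exists_hasDecomp hN X)

lemma detTensor_perm {N : ℕ} (π : Equiv.Perm (Fin N)) :
    detTensor N ⇑π = ((Equiv.Perm.sign π : ℤ) : ℂ) := by
  unfold detTensor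
  rw [Finset.sum_eq_single π]
  · simp
  · intro b _ hb
    rw [if_neg]
    intro h
    exact hb (Equiv.coe_fn_injective h.symm)
  · simp

lemma basisTensor_comp {N K : ℕ} {u : Fin N → Fin K} (hu : Function.Injective u)
    (m : Fin N → Fin N) : basisTensor u (u ∘ m) = detTensor N m := by
  unfold basisTensor detTensor
  refine Finset.sum_congr rfl fun π _ => ?_
  congr 1
  simp only [eq_iff_iff]
  constructor
  · intro h; funext j; exact hu (congrFun h j)
  · intro h; rw [h]

lemma basisTensor_eq_zero {N K : ℕ} {u : Fin N → Fin K} {ℓ : Fin N → Fin K}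
    (h : ∀ π : Equiv.Perm (Fin N), ℓ ≠ u ∘ ⇑π) : basisTensor u ℓ = 0 := by
  unfold basisTensor
  exact Finset.sum_eq_zero fun π _ => if_neg (h π)

lemma hasDecomp_zero {N K : ℕ} : HasDecomp (0 : (Fin N → Fin K) → ℂ) 0 :=
  ⟨fun i => i.elim0, fun k => by simp⟩

lemma hasDecomp_add {N K p q : ℕ} {X Y : (Fin N → Fin K) → ℂ}
    (hx : HasDecomp X p) (hy : HasDecomp Y q) : HasDecomp (X + Y) (p + q) := by
  obtain ⟨x, hx⟩ := hx
  obtain ⟨y, hy⟩ := hy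
  refine ⟨Fin.addCases x y, fun k => ?_⟩
  rw [Fin.sum_univ_add]
  simp only [Fin.addCases_left, Fin.addCases_right]
  rw [Pi.add_apply, hx k, hy k]

lemma hasDecomp_finsetSum {N K p : ℕ} {ι : Type*} (t : Finset ι)
    (f : ι → (Fin N → Fin K) → ℂ) (h : ∀ i ∈ t, HasDecomp (f i) p) :
    HasDecomp (∑ i ∈ t, f i) (t.card * p) := by
  classical
  induction t using Finset.induction_on with
  | empty => simpa using hasDecomp_zero
  | @insert a s hni ih =>
    rw [Finset.sum_insert hni, Finset.card_insert_of_notMem hni, add_mul, one_mul,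
      add_comm (s.card * p) p]
    exact hasDecomp_add (h a (Finset.mem_insert_self a s))
      (ih fun i hi => h i (Finset.mem_insert_of_mem hi))

lemma hasDecomp_smul_basisTensor {N K p : ℕ} (hN : 0 < N) {u : Fin N → Fin K}
    (hu : Function.Injective u) (c : ℂ) (h : HasDecomp (detTensor N) p) :
    HasDecomp (c • basisTensor u) p := by
  classical
  obtain ⟨x, hx⟩ := h
  have : Nonempty (Fin N) := ⟨⟨0, hN⟩⟩
  refine ⟨fun i j t => (if j = (⟨0, hN⟩ : Fin N) then c else 1) *
    (if t ∈ Set.range u then x i j (Function.invFun u t) else 0), fun ℓ => ?_⟩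
  by_cases hall : ∀ j, ℓ j ∈ Set.range u
  · set m : Fin N → Fin N := fun j => Function.invFun u (ℓ j) with hm
    have hum : u ∘ m = ℓ := by
      funext j
      exact Function.invFun_eq (hall j)
    have key : ∀ i, (∏ j, ((if j = (⟨0, hN⟩ : Fin N) then c else 1) *
        (if ℓ j ∈ Set.range u then x i j (Function.invFun u (ℓ j)) else 0)))
        = c * ∏ j, x i j (m j) := by
      intro i
      rw [Finset.prod_mul_distrib, Finset.prod_ite_eq' Finset.univ (⟨0, hN⟩ : Fin N)
        (fun _ => c)]
      simp only [Finset.mem_univ, if_true]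
      congr 1
      exact Finset.prod_congr rfl fun j _ => if_pos (hall j)
    rw [Finset.sum_congr rfl fun i _ => key i, ← Finset.mul_sum, ← hx m,
      Pi.smul_apply, smul_eq_mul, ← hum, basisTensor_comp hu m]
  · push_neg at hall
    obtain ⟨j0, hj0⟩ := hall
    have hz : basisTensor u ℓ = 0 := by
      refine basisTensor_eq_zero fun π hπ => ?_
      exact hj0 ⟨π j0, (congrFun hπ j0).symm⟩
    rw [Pi.smul_apply, hz, smul_zero]
    refine (Finset.sum_eq_zero fun i _ => ?_).symm
    refine Finset.prod_eq_zero (Finset.mem_univ j0) ?_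
    simp [hj0]

lemma antisym_decomp {N K : ℕ} (hN : 0 < N) (X : (Fin N → Fin K) → ℂ)
    (hX : IsAntisymTensor X) :
    X = ∑ t : {s : Finset (Fin K) // s.card = N},
      X ⇑(t.1.orderEmbOfFin t.2) • basisTensor ⇑(t.1.orderEmbOfFin t.2) := by
  classical
  funext ℓ
  rw [Finset.sum_apply]
  by_cases hℓ : Function.Injective ℓ
  · -- the injective case
    set s₀ : Finset (Fin K) := Finset.image ℓ Finset.univ with hs₀
    have h₀ : s₀.card = N := by
      rw [hs₀, Finset.card_image_of_injective _ hℓ, Finset.card_univ, Fintype.card_fin]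
    set u : Fin N → Fin K := ⇑(s₀.orderEmbOfFin h₀) with hu
    have huinj : Function.Injective u := (s₀.orderEmbOfFin h₀).injective
    have e1mem : ∀ j, ℓ j ∈ s₀ := fun j => Finset.mem_image_of_mem ℓ (Finset.mem_univ j)
    set e1 : Fin N → {y // y ∈ s₀} := fun j => ⟨ℓ j, e1mem j⟩ with he1
    have he1inj : Function.Injective e1 := fun a b hab => hℓ (congrArg Subtype.val hab)
    have hbij : Function.Bijective e1 := by
      have : Fintype.card {y // y ∈ s₀} = Fintype.card (Fin N) := by
        rw [Fintype.card_coe, h₀, Fintype.card_fin]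
      exact (Fintype.bijective_iff_injective_and_card e1).mpr ⟨he1inj, this.symm⟩
    set π : Equiv.Perm (Fin N) :=
      (Equiv.ofBijective e1 hbij).trans (s₀.orderIsoOfFin h₀).symm.toEquiv with hπ
    have key : u ∘ ⇑π = ℓ := by
      funext j
      show u (π j) = ℓ j
      have h1 : π j = (s₀.orderIsoOfFin h₀).symm (e1 j) := rfl
      have h2 : u (π j) = ((s₀.orderIsoOfFin h₀ (π j) : {y // y ∈ s₀}) : Fin K) := by
        rw [Finset.coe_orderIsoOfFin_apply]
      rw [h2, h1, OrderIso.apply_symm_apply]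
    -- evaluate the sum: only t = ⟨s₀, h₀⟩ survives
    rw [Finset.sum_eq_single (⟨s₀, h₀⟩ : {s : Finset (Fin K) // s.card = N})]
    · show X ℓ = X u • basisTensor u ℓ
      rw [← key, basisTensor_comp huinj, detTensor_perm, hX π u, smul_eq_mul, mul_comm]
    · intro t _ ht
      show X _ • basisTensor ⇑(t.1.orderEmbOfFin t.2) ℓ = 0
      have hz : basisTensor ⇑(t.1.orderEmbOfFin t.2) ℓ = 0 := by
        refine basisTensor_eq_zero fun π' hπ' => ?_
        apply ht
        have hrange : Set.range ℓ = ↑t.1 := by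
          rw [hπ', Set.range_comp, Equiv.range_eq_univ, Set.image_univ,
            Finset.range_orderEmbOfFin]
        have hs : s₀ = t.1 := by
          apply Finset.coe_injective
          rw [hs₀, Finset.coe_image, Finset.coe_univ, Set.image_univ, hrange]
        exact Subtype.ext hs.symm
      rw [hz, smul_zero]
    · intro ht
      exact absurd (Finset.mem_univ _) ht
  · -- non-injective case: both sides vanish
    obtain ⟨a, b, hab, hne⟩ := Function.not_injective_iff.mp hℓ
    have hswap : ℓ ∘ ⇑(Equiv.swap a b) = ℓ := by
      funext j
      rcases eq_or_ne j a with rfl | hja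
      · simp [Equiv.swap_apply_left, hab]
      rcases eq_or_ne j b with rfl | hjb
      · simp [Equiv.swap_apply_right, hab]
      · simp [Equiv.swap_apply_of_ne_of_ne hja hjb]
    have hXzero : X ℓ = 0 := by
      have := hX (Equiv.swap a b) ℓ
      rw [hswap, Equiv.Perm.sign_swap hne] at this
      norm_num at this
      linear_combination this / 2
    rw [hXzero]
    refine (Finset.sum_eq_zero fun t _ => ?_).symm
    show X _ • basisTensor ⇑(t.1.orderEmbOfFin t.2) ℓ = 0
    have hz : basisTensor ⇑(t.1.orderEmbOfFin t.2) ℓ = 0 := by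
      refine basisTensor_eq_zero fun π' hπ' => ?_
      exact hℓ (hπ' ▸ ((t.1.orderEmbOfFin t.2).injective.comp π'.injective))
    rw [hz, smul_zero]

theorem cpRank_antisym_le_choose_mul_cpRank_detTensor {N K : ℕ} (hN : 1 ≤ N) (hKN : N ≤ K)
    (X : (Fin N → Fin K) → ℂ) (hX : IsAntisymTensor X) :
    cpRank X ≤ K.choose N * cpRank (detTensor N) := by
  classical
  have hN0 : 0 < N := hN
  have hdet : HasDecomp (detTensor N) (cpRank (detTensor N)) := hasDecomp_cpRank hN0 _
  have hcard : Fintype.card {s : Finset (Fin K) // s.card = N} = K.choose N := by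
    rw [Fintype.card_finset_len]; simp
  have h1 : HasDecomp X (Fintype.card {s : Finset (Fin K) // s.card = N}
      * cpRank (detTensor N)) := by
    rw [antisym_decomp hN0 X hX, ← Finset.card_univ]
    exact hasDecomp_finsetSum _ _ fun t _ =>
      hasDecomp_smul_basisTensor hN0 (t.1.orderEmbOfFin t.2).injective _ hdet
  calc cpRank X ≤ _ := cpRank_le_of_hasDecomp h1
    _ = K.choose N * cpRank (detTensor N) := by rw [hcard]
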